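/- arXiv:2012.03020 — 2 statements merged into one kernel-verified Lean document; each statement's English description precedes it below -/
import Mathlib

section
/- For 3-periodic billiard orbits in the ellipse x²/a² + y²/b² = 1, Joachimsthal's constant equals J = √(2δ − a² − b²)/c², where δ = √(a⁴ − a²b² + b⁴) and c² = a² − b². -/
noncomputable section

namespace BilliardInv

/-- A point of the plane. -/
abbrev Pt := ℝ × ℝ

/-- Euclidean dot product. -/
def dot (p q : Pt) : ℝ := p.1 * q.1 + p.2 * q.2

/-- Euclidean distance. -/
def dst (p q : Pt) : ℝ := Real.sqrt ((p.1 - q.1) ^ 2 + (p.2 - q.2) ^ 2)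

/-- Membership in the ellipse x²/a² + y²/b² = 1. -/
def onEllipse (a b : ℝ) (p : Pt) : Prop := p.1 ^ 2 / a ^ 2 + p.2 ^ 2 / b ^ 2 = 1

/-- Half the gradient of f(x,y) = x²/a² + y²/b² (an outward normal direction). -/
def nrm (a b : ℝ) (p : Pt) : Pt := (p.1 / a ^ 2, p.2 / b ^ 2)

/-- Unit vector pointing from `v` toward `q`. -/
def udir (v q : Pt) : Pt := (dst v q)⁻¹ • (q - v)

/-- The billiard reflection law at vertex `v` with neighboring vertices `q`, `r`:
the two adjacent sides make equal angles with the ellipse normal at `v`. -/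
def reflectAt (a b : ℝ) (q v r : Pt) : Prop :=
  dot (udir v q) (nrm a b v) = dot (udir v r) (nrm a b v)

/-- A 3-periodic billiard orbit in the ellipse with semi-axes `a > b > 0`:
a nondegenerate triangle inscribed in the ellipse obeying the reflection
law at each vertex. -/
structure Orbit3 (a b : ℝ) : Type where
  P1 : Pt
  P2 : Pt
  P3 : Pt
  h1 : onEllipse a b P1
  h2 : onEllipse a b P2
  h3 : onEllipse a b P3
  d12 : P1 ≠ P2
  d23 : P2 ≠ P3
  d31 : P3 ≠ P1
  r1 : reflectAt a b P3 P1 P2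
  r2 : reflectAt a b P1 P2 P3
  r3 : reflectAt a b P2 P3 P1

/-- Inversion of `p` with respect to the circle of radius `ρ` centered at `f`. -/
def inva (ρ : ℝ) (f p : Pt) : Pt :=
  f + (ρ ^ 2 / ((p.1 - f.1) ^ 2 + (p.2 - f.2) ^ 2)) • (p - f)

/-- Unsigned area of a triangle. -/
def area (A B C : Pt) : ℝ :=
  |(B.1 - A.1) * (C.2 - A.2) - (B.2 - A.2) * (C.1 - A.1)| / 2

/-- The point with barycentric coordinates wA : wB : wC w.r.t. triangle ABC. -/
def bary (wA wB wC : ℝ) (A B C : Pt) : Pt :=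
  (wA + wB + wC)⁻¹ • (wA • A + wB • B + wC • C)

/-- Side length a = |BC|. -/
def sA (A B C : Pt) : ℝ := dst B C
/-- Side length b = |CA|. -/
def sB (A B C : Pt) : ℝ := dst C A
/-- Side length c = |AB|. -/
def sC (A B C : Pt) : ℝ := dst A B

/-- Incenter X(1). -/
def incenter (A B C : Pt) : Pt := bary (sA A B C) (sB A B C) (sC A B C) A B C

/-- Barycenter (centroid) X(2). -/
def centroid (A B C : Pt) : Pt := bary 1 1 1 A B C

/-- Circumcenter X(3), via its barycentric coordinates a²(b²+c²−a²) : · : ·. -/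
def circumcenter (A B C : Pt) : Pt :=
  bary (sA A B C ^ 2 * (sB A B C ^ 2 + sC A B C ^ 2 - sA A B C ^ 2))
       (sB A B C ^ 2 * (sC A B C ^ 2 + sA A B C ^ 2 - sB A B C ^ 2))
       (sC A B C ^ 2 * (sA A B C ^ 2 + sB A B C ^ 2 - sC A B C ^ 2)) A B C

/-- Orthocenter X(4) = A + B + C − 2·(circumcenter). -/
def orthocenter (A B C : Pt) : Pt := A + B + C - (2 : ℝ) • circumcenter A B C

/-- Nine-point center X(5): midpoint of circumcenter and orthocenter. -/
def ninePointCenter (A B C : Pt) : Pt :=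
  ((1 : ℝ) / 2) • (circumcenter A B C + orthocenter A B C)

/-- Gergonne point X(7), barycentrics 1/(b+c−a) : 1/(c+a−b) : 1/(a+b−c). -/
def gergonne (A B C : Pt) : Pt :=
  bary (sB A B C + sC A B C - sA A B C)⁻¹
       (sC A B C + sA A B C - sB A B C)⁻¹
       (sA A B C + sB A B C - sC A B C)⁻¹ A B C

/-- Mittenpunkt X(9), barycentrics a(b+c−a) : b(c+a−b) : c(a+b−c). -/
def mittenpunkt (A B C : Pt) : Pt :=
  bary (sA A B C * (sB A B C + sC A B C - sA A B C))
       (sB A B C * (sC A B C + sA A B C - sB A B C))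
       (sC A B C * (sA A B C + sB A B C - sC A B C)) A B C

/-- Feuerbach point X(11), barycentrics (b+c−a)(b−c)² : · : ·. -/
def feuerbach (A B C : Pt) : Pt :=
  bary ((sB A B C + sC A B C - sA A B C) * (sB A B C - sC A B C) ^ 2)
       ((sC A B C + sA A B C - sB A B C) * (sC A B C - sA A B C) ^ 2)
       ((sA A B C + sB A B C - sC A B C) * (sA A B C - sB A B C) ^ 2) A B C

/-- Triangle center X(100), barycentrics a/(b−c) : b/(c−a) : c/(a−b). -/
def X100 (A B C : Pt) : Pt :=
  bary (sA A B C / (sB A B C - sC A B C))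
       (sB A B C / (sC A B C - sA A B C))
       (sC A B C / (sA A B C - sB A B C)) A B C

/-- Orthogonal projection of `Q` onto the line through `A` and `B`. -/
def projLine (Q A B : Pt) : Pt :=
  A + (dot (Q - A) (B - A) / dot (B - A) (B - A)) • (B - A)

/-- Unsigned area of the pedal triangle of `Q` w.r.t. triangle `A B C`. -/
def pedalArea (Q A B C : Pt) : ℝ :=
  area (projLine Q A B) (projLine Q B C) (projLine Q C A)


-- auxiliary lemmas

lemma dot_comm (p q : Pt) : dot p q = dot q p := by unfold dot; ring

lemma dst_comm (p q : Pt) : dst p q = dst q p := by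
  unfold dst; congr 1; ring

lemma sumsq_pos {p q : Pt} (h : p ≠ q) : 0 < (p.1 - q.1) ^ 2 + (p.2 - q.2) ^ 2 := by
  rcases (add_nonneg (sq_nonneg (p.1 - q.1)) (sq_nonneg (p.2 - q.2))).lt_or_eq with h' | h'
  · exact h'
  · exfalso
    have h1 : (p.1 - q.1) ^ 2 = 0 := by nlinarith [sq_nonneg (p.1 - q.1), sq_nonneg (p.2 - q.2)]
    have h2 : (p.2 - q.2) ^ 2 = 0 := by nlinarith [sq_nonneg (p.1 - q.1), sq_nonneg (p.2 - q.2)]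
    exact h (Prod.ext_iff.mpr ⟨by nlinarith [sq_nonneg (p.1-q.1)], by nlinarith [sq_nonneg (p.2-q.2)]⟩)

lemma dst_pos {p q : Pt} (h : p ≠ q) : 0 < dst p q :=
  Real.sqrt_pos.mpr (sumsq_pos h)

lemma dst_sq (p q : Pt) : dst p q ^ 2 = (p.1 - q.1) ^ 2 + (p.2 - q.2) ^ 2 :=
  Real.sq_sqrt (by positivity)

/-- value of the Joachimsthal dot along a chord -/
lemma chord (a b : ℝ) (v q : Pt) (hv : onEllipse a b v) (hq : onEllipse a b q) :
    dot (nrm a b v) (udir v q)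
      = -((dst v q)⁻¹ * ((q.1 - v.1) ^ 2 / a ^ 2 + (q.2 - v.2) ^ 2 / b ^ 2) / 2) := by
  unfold onEllipse at hv hq
  unfold dot udir nrm
  simp only [Prod.smul_fst, Prod.smul_snd, Prod.fst_sub, Prod.snd_sub, smul_eq_mul]
  linear_combination ((dst v q)⁻¹ / 2) * hq - ((dst v q)⁻¹ / 2) * hv

/-- Gram determinant of three plane vectors w.r.t. the B-form vanishes. -/
lemma gram_aux (a b x1 y1 x2 y2 x3 y3 g11 g22 g33 g12 g13 g23 : ℝ)
    (ha : a ≠ 0) (hb : b ≠ 0)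
    (e11 : x1 * x1 / a ^ 2 + y1 * y1 / b ^ 2 = g11)
    (e22 : x2 * x2 / a ^ 2 + y2 * y2 / b ^ 2 = g22)
    (e33 : x3 * x3 / a ^ 2 + y3 * y3 / b ^ 2 = g33)
    (e12 : x1 * x2 / a ^ 2 + y1 * y2 / b ^ 2 = g12)
    (e13 : x1 * x3 / a ^ 2 + y1 * y3 / b ^ 2 = g13)
    (e23 : x2 * x3 / a ^ 2 + y2 * y3 / b ^ 2 = g23) :
    g11 * (g22 * g33 - g23 ^ 2) - g12 * (g12 * g33 - g13 * g23)
      + g13 * (g12 * g23 - g13 * g22) = 0 := by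
  subst e11 e22 e33 e12 e13 e23
  field_simp
  ring

/-- determinant and trace compatibility between the B-form and the Euclidean form -/
lemma dt_aux (a b u1 u2 v1 v2 Buu Bvv Buv Euu Evv Euv : ℝ)
    (ha : a ≠ 0) (hb : b ≠ 0)
    (hBuu : u1 * u1 / a ^ 2 + u2 * u2 / b ^ 2 = Buu)
    (hBvv : v1 * v1 / a ^ 2 + v2 * v2 / b ^ 2 = Bvv)
    (hBuv : u1 * v1 / a ^ 2 + u2 * v2 / b ^ 2 = Buv)
    (hEuu : u1 * u1 + u2 * u2 = Euu)
    (hEvv : v1 * v1 + v2 * v2 = Evv)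
    (hEuv : u1 * v1 + u2 * v2 = Euv) :
    (Buu * Bvv - Buv ^ 2) * (a ^ 2 * b ^ 2) = Euu * Evv - Euv ^ 2 ∧
    (Buu * Evv + Bvv * Euu - 2 * Buv * Euv) * (a ^ 2 * b ^ 2)
      = (a ^ 2 + b ^ 2) * (Euu * Evv - Euv ^ 2) := by
  subst hBuu hBvv hBuv hEuu hEvv hEuv
  constructor <;> (field_simp; ring)

/-- the scalar elimination: the three structural equations force Joachimsthal's value. -/
lemma main_aux (a b J p q r : ℝ) (ha : a ≠ 0) (hb : b ≠ 0) (hp : 0 < p) (hq : 0 < q) (hr : 0 < r) (hJ : 0 < J)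
    (EQ1 : 1 * ((1:ℝ) * 1 - (1 - J * p) ^ 2)
        - (1 - J * r) * ((1 - J * r) * 1 - (1 - J * q) * (1 - J * p))
        + (1 - J * q) * ((1 - J * r) * (1 - J * p) - (1 - J * q) * 1) = 0)
    (EQ2 : ((2 * J * r) * (2 * J * q) - (J * (q + r - p)) ^ 2) * (a ^ 2 * b ^ 2)
        = r ^ 2 * q ^ 2 - ((q ^ 2 + r ^ 2 - p ^ 2) / 2) ^ 2)
    (EQ3 : ((2 * J * r) * q ^ 2 + (2 * J * q) * r ^ 2
          - 2 * (J * (q + r - p)) * ((q ^ 2 + r ^ 2 - p ^ 2) / 2)) * (a ^ 2 * b ^ 2)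
        = (a ^ 2 + b ^ 2) * (r ^ 2 * q ^ 2 - ((q ^ 2 + r ^ 2 - p ^ 2) / 2) ^ 2)) :
    (a ^ 2 - b ^ 2) ^ 2 * J ^ 4 + 2 * (a ^ 2 + b ^ 2) * J ^ 2 - 3 = 0 := by
  have he3 : J ^ 3 * (p * q * r) ≠ 0 := by positivity
  -- Step1 : 4 e2 - e1^2 - 2 e3 = 0
  have Step1 : 4 * (J ^ 2 * (p * q + q * r + r * p)) - (J * (p + q + r)) ^ 2
      - 2 * (J ^ 3 * (p * q * r)) = 0 := by linear_combination EQ1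
  -- k1 : H = 8 a²b² e3
  have k1 : 4 * r ^ 2 * q ^ 2 - (q ^ 2 + r ^ 2 - p ^ 2) ^ 2
      = 8 * (a ^ 2 * b ^ 2) * (J ^ 3 * (p * q * r)) := by
    linear_combination (-4) * EQ2 + 4 * (a ^ 2 * b ^ 2) * Step1
  -- k2 : J⁴ H = 2 e1² e3 - 8 e1 e3
  have k2 : J ^ 4 * (4 * r ^ 2 * q ^ 2 - (q ^ 2 + r ^ 2 - p ^ 2) ^ 2)
      = 2 * (J * (p + q + r)) ^ 2 * (J ^ 3 * (p * q * r))
        - 8 * (J * (p + q + r)) * (J ^ 3 * (p * q * r)) := by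
    linear_combination (J * (p + q + r)) ^ 2 * Step1
  have k3 : (J ^ 3 * (p * q * r)) * (2 * (J * (p + q + r)) ^ 2 - 8 * (J * (p + q + r))
      - 8 * (a ^ 2 * b ^ 2) * J ^ 4) = 0 := by
    linear_combination J ^ 4 * k1 - k2
  have Star : 2 * (J * (p + q + r)) ^ 2 - 8 * (J * (p + q + r))
      - 8 * (a ^ 2 * b ^ 2) * J ^ 4 = 0 := by
    rcases mul_eq_zero.mp k3 with h | h
    · exact absurd h he3
    · exact h
  -- m1 : J³·LHS3 = 2 J e3 (e1 - 3)
  have m1 : J ^ 3 * ((2 * J * r) * q ^ 2 + (2 * J * q) * r ^ 2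
        - 2 * (J * (q + r - p)) * ((q ^ 2 + r ^ 2 - p ^ 2) / 2))
      = 2 * J * (J ^ 3 * (p * q * r)) * (J * (p + q + r) - 3) := by
    linear_combination (J ^ 2 * (p + q + r)) * Step1
  have m3 : (2 * (a ^ 2 * b ^ 2) * J * (J ^ 3 * (p * q * r)))
      * ((J * (p + q + r)) - 3 - (a ^ 2 + b ^ 2) * J ^ 2) = 0 := by
    linear_combination (-(a ^ 2 * b ^ 2)) * m1 + J ^ 3 * EQ3
      + ((a ^ 2 + b ^ 2) * J ^ 3 / 4) * k1
  have hab0 : (2 * (a ^ 2 * b ^ 2) * J * (J ^ 3 * (p * q * r))) ≠ 0 := by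
    have := hJ; positivity
  have mkey : (J * (p + q + r)) - 3 - (a ^ 2 + b ^ 2) * J ^ 2 = 0 := by
    rcases mul_eq_zero.mp m3 with h | h
    · exact absurd h hab0
    · exact h
  linear_combination Star / 2 - (J * (p + q + r) + (a ^ 2 + b ^ 2) * J ^ 2 - 1) * mkey


end BilliardInv

open BilliardInv Real

set_option maxHeartbeats 1600000 in
/-- for 3-periodic billiard orbits, Joachimsthal's constant
J = (1/2)|∇f·v̂| (the same at every vertex, with v̂ the unit vector along the
outgoing side) equals √(2δ − a² − b²)/c². -/
theorem joachimsthal_constant_three_periodics (a b : ℝ) (hab : a > b) (hb : b > 0)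
    (T : Orbit3 a b) :
    let δ : ℝ := Real.sqrt (a ^ 4 - a ^ 2 * b ^ 2 + b ^ 4)
    let J : ℝ := Real.sqrt (2 * δ - a ^ 2 - b ^ 2) / (a ^ 2 - b ^ 2)
    |dot (nrm a b T.P1) (udir T.P1 T.P2)| = J ∧
    |dot (nrm a b T.P2) (udir T.P2 T.P3)| = J ∧
    |dot (nrm a b T.P3) (udir T.P3 T.P1)| = J := by
  intro δ Jg
  have ha0 : (0:ℝ) < a := lt_trans hb hab
  have ha : a ≠ 0 := ne_of_gt ha0
  have hbne : b ≠ 0 := ne_of_gt hb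
  obtain ⟨P1, P2, P3, h1, h2, h3, d12, d23, d31, r1, r2, r3⟩ := T
  show |dot (nrm a b P1) (udir P1 P2)| = Jg ∧ |dot (nrm a b P2) (udir P2 P3)| = Jg ∧
    |dot (nrm a b P3) (udir P3 P1)| = Jg
  unfold onEllipse at h1 h2 h3
  unfold reflectAt at r2 r3
  have hrpos : 0 < dst P1 P2 := dst_pos d12
  have hppos : 0 < dst P2 P3 := dst_pos d23
  have hqpos : 0 < dst P3 P1 := dst_pos d31
  have hrne : dst P1 P2 ≠ 0 := ne_of_gt hrpos
  have hpne : dst P2 P3 ≠ 0 := ne_of_gt hppos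
  have hqne : dst P3 P1 ≠ 0 := ne_of_gt hqpos
  -- Joachimsthal's constant of the first chord
  obtain ⟨J0, hJ0⟩ : ∃ j : ℝ, j = ((P2.1 - P1.1) ^ 2 / a ^ 2 + (P2.2 - P1.2) ^ 2 / b ^ 2)
      / (2 * dst P1 P2) := ⟨_, rfl⟩
  have hB12pos : 0 < (P2.1 - P1.1) ^ 2 / a ^ 2 + (P2.2 - P1.2) ^ 2 / b ^ 2 := by
    have hne : P2.1 - P1.1 ≠ 0 ∨ P2.2 - P1.2 ≠ 0 := by
      by_contra hc
      push_neg at hc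
      exact d12 (Prod.ext_iff.mpr ⟨(sub_eq_zero.mp hc.1).symm, (sub_eq_zero.mp hc.2).symm⟩)
    rcases hne with h | h
    · have k1 : 0 < (P2.1 - P1.1) ^ 2 / a ^ 2 := by positivity
      have k2 : 0 ≤ (P2.2 - P1.2) ^ 2 / b ^ 2 := by positivity
      linarith
    · have k1 : 0 ≤ (P2.1 - P1.1) ^ 2 / a ^ 2 := by positivity
      have k2 : 0 < (P2.2 - P1.2) ^ 2 / b ^ 2 := by positivity
      linarith
  have hJ0pos : 0 < J0 := by
    rw [hJ0]
    exact div_pos hB12pos (by linarith)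
  -- chord values
  have c12 := chord a b P1 P2 h1 h2
  have c21 := chord a b P2 P1 h2 h1
  have c23 := chord a b P2 P3 h2 h3
  have c32 := chord a b P3 P2 h3 h2
  have c31 := chord a b P3 P1 h3 h1
  rw [dst_comm P2 P1] at c21
  rw [dst_comm P3 P2] at c32
  have hB12v : (P2.1 - P1.1) ^ 2 / a ^ 2 + (P2.2 - P1.2) ^ 2 / b ^ 2
      = 2 * J0 * dst P1 P2 := by
    rw [hJ0]; field_simp
  have hd12 : dot (nrm a b P1) (udir P1 P2) = -J0 := by
    rw [c12, hJ0]; ring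
  -- reflection at P2 : transfer J to the second chord
  rw [dot_comm (udir P2 P1) (nrm a b P2), dot_comm (udir P2 P3) (nrm a b P2), c21, c23] at r2
  have e1 : (dst P1 P2)⁻¹ * ((P1.1 - P2.1) ^ 2 / a ^ 2 + (P1.2 - P2.2) ^ 2 / b ^ 2)
      = (dst P2 P3)⁻¹ * ((P3.1 - P2.1) ^ 2 / a ^ 2 + (P3.2 - P2.2) ^ 2 / b ^ 2) := by
    linarith [r2]
  have h2J : (dst P1 P2)⁻¹ * ((P1.1 - P2.1) ^ 2 / a ^ 2 + (P1.2 - P2.2) ^ 2 / b ^ 2)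
      = 2 * J0 := by
    rw [hJ0]; ring
  rw [h2J] at e1
  have hB23 : (P3.1 - P2.1) ^ 2 / a ^ 2 + (P3.2 - P2.2) ^ 2 / b ^ 2
      = 2 * J0 * dst P2 P3 := by
    rw [e1]; field_simp
  have hd23 : dot (nrm a b P2) (udir P2 P3) = -J0 := by
    rw [c23, hB23]; field_simp
  -- reflection at P3 : transfer J to the third chord
  rw [dot_comm (udir P3 P2) (nrm a b P3), dot_comm (udir P3 P1) (nrm a b P3), c32, c31] at r3
  have e2 : (dst P2 P3)⁻¹ * ((P2.1 - P3.1) ^ 2 / a ^ 2 + (P2.2 - P3.2) ^ 2 / b ^ 2)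
      = (dst P3 P1)⁻¹ * ((P1.1 - P3.1) ^ 2 / a ^ 2 + (P1.2 - P3.2) ^ 2 / b ^ 2) := by
    linarith [r3]
  have h2Jp : (dst P2 P3)⁻¹ * ((P2.1 - P3.1) ^ 2 / a ^ 2 + (P2.2 - P3.2) ^ 2 / b ^ 2)
      = 2 * J0 := by
    have hsw : (P2.1 - P3.1) ^ 2 / a ^ 2 + (P2.2 - P3.2) ^ 2 / b ^ 2
        = (P3.1 - P2.1) ^ 2 / a ^ 2 + (P3.2 - P2.2) ^ 2 / b ^ 2 := by ring
    rw [hsw, hB23]; field_simp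
  rw [h2Jp] at e2
  have hB31 : (P1.1 - P3.1) ^ 2 / a ^ 2 + (P1.2 - P3.2) ^ 2 / b ^ 2
      = 2 * J0 * dst P3 P1 := by
    rw [e2]; field_simp
  have hd31 : dot (nrm a b P3) (udir P3 P1) = -J0 := by
    rw [c31, hB31]; field_simp
  -- structural scalar equations
  have hg12 : P1.1 * P2.1 / a ^ 2 + P1.2 * P2.2 / b ^ 2 = 1 - J0 * dst P1 P2 := by
    linear_combination (h1 + h2 - hB12v) / 2
  have hg23 : P2.1 * P3.1 / a ^ 2 + P2.2 * P3.2 / b ^ 2 = 1 - J0 * dst P2 P3 := by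
    linear_combination (h2 + h3 - hB23) / 2
  have hg13 : P1.1 * P3.1 / a ^ 2 + P1.2 * P3.2 / b ^ 2 = 1 - J0 * dst P3 P1 := by
    linear_combination (h1 + h3 - hB31) / 2
  have EQ1 := gram_aux a b P1.1 P1.2 P2.1 P2.2 P3.1 P3.2 1 1 1
      (1 - J0 * dst P1 P2) (1 - J0 * dst P3 P1) (1 - J0 * dst P2 P3) ha hbne
      (by linear_combination h1) (by linear_combination h2) (by linear_combination h3)
      hg12 hg13 hg23
  have HD := dt_aux a b (P2.1 - P1.1) (P2.2 - P1.2) (P3.1 - P1.1) (P3.2 - P1.2)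
      (2 * J0 * dst P1 P2) (2 * J0 * dst P3 P1)
      (J0 * (dst P3 P1 + dst P1 P2 - dst P2 P3))
      ((dst P1 P2) ^ 2) ((dst P3 P1) ^ 2)
      (((dst P3 P1) ^ 2 + (dst P1 P2) ^ 2 - (dst P2 P3) ^ 2) / 2) ha hbne
      (by linear_combination hB12v) (by linear_combination hB31)
      (by linear_combination (hB12v + hB31 - hB23) / 2)
      (by linear_combination (-1 : ℝ) * dst_sq P1 P2)
      (by linear_combination (-1 : ℝ) * dst_sq P3 P1)
      (by linear_combination (dst_sq P2 P3 - dst_sq P1 P2 - dst_sq P3 P1) / 2)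
  have Phi := main_aux a b J0 (dst P2 P3) (dst P3 P1) (dst P1 P2) ha hbne
      hppos hqpos hrpos hJ0pos EQ1 HD.1 HD.2
  -- solve for J0
  have hc2 : (0:ℝ) < a ^ 2 - b ^ 2 :=
    sub_pos.mpr (pow_lt_pow_left₀ hab (le_of_lt hb) (by norm_num))
  have hD : a ^ 4 - a ^ 2 * b ^ 2 + b ^ 4
      = (((a ^ 2 - b ^ 2) ^ 2 * J0 ^ 2 + a ^ 2 + b ^ 2) / 2) ^ 2 := by
    linear_combination (-(a ^ 2 - b ^ 2) ^ 2 / 4) * Phi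
  have hδval : δ = ((a ^ 2 - b ^ 2) ^ 2 * J0 ^ 2 + a ^ 2 + b ^ 2) / 2 := by
    have hδ : δ = Real.sqrt (a ^ 4 - a ^ 2 * b ^ 2 + b ^ 4) := rfl
    rw [hδ, hD, Real.sqrt_sq (by positivity)]
  have hJgval : Jg = J0 := by
    have hJg : Jg = Real.sqrt (2 * δ - a ^ 2 - b ^ 2) / (a ^ 2 - b ^ 2) := rfl
    have h2 : 2 * δ - a ^ 2 - b ^ 2 = ((a ^ 2 - b ^ 2) * J0) ^ 2 := by
      rw [hδval]; ring
    rw [hJg, h2, Real.sqrt_sq (le_of_lt (mul_pos hc2 hJ0pos)),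
      mul_div_cancel_left₀ J0 (ne_of_gt hc2)]
  refine ⟨?_, ?_, ?_⟩
  · rw [hJgval, hd12, abs_neg, abs_of_pos hJ0pos]
  · rw [hJgval, hd23, abs_neg, abs_of_pos hJ0pos]
  · rw [hJgval, hd31, abs_neg, abs_of_pos hJ0pos]
end
end

section
/- Over the 3-periodic billiard family, the locus of the circumcenter X₃⊙ of the center-inversive triangle is the ellipse obtained by scaling the elliptic locus of the circumcenter X₃ of the 3-periodics by the factor 1/δ, where δ = √(a⁴ − a²b² + b⁴); equivalently, for each orbit, X₃⊙ = X₃/δ (as vectors from the billiard center), using the fact that the power of the billiard center with respect to the circumcircle of every 3-periodic equals −δ. -/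
noncomputable section

namespace BilliardInv

/-- Twice the signed area (cross product of edge vectors). -/
def cr (A B C : Pt) : ℝ := (B.1 - A.1) * (C.2 - A.2) - (B.2 - A.2) * (C.1 - A.1)

lemma dot_smul_left (c : ℝ) (p q : Pt) : dot (c • p) q = c * dot p q := by
  simp [dot, Prod.smul_fst, Prod.smul_snd, smul_eq_mul]; ring

lemma circumcenter_eq_smul (A B C : Pt) :
    circumcenter A B C =
      (sA A B C ^ 2 * (sB A B C ^ 2 + sC A B C ^ 2 - sA A B C ^ 2)
       + sB A B C ^ 2 * (sC A B C ^ 2 + sA A B C ^ 2 - sB A B C ^ 2)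
       + sC A B C ^ 2 * (sA A B C ^ 2 + sB A B C ^ 2 - sC A B C ^ 2))⁻¹ •
      ((sA A B C ^ 2 * (sB A B C ^ 2 + sC A B C ^ 2 - sA A B C ^ 2)) • A
       + (sB A B C ^ 2 * (sC A B C ^ 2 + sA A B C ^ 2 - sB A B C ^ 2)) • B
       + (sC A B C ^ 2 * (sA A B C ^ 2 + sB A B C ^ 2 - sC A B C ^ 2)) • C) := by
  rfl

lemma sum_w (A B C : Pt) :
    sA A B C ^ 2 * (sB A B C ^ 2 + sC A B C ^ 2 - sA A B C ^ 2)
     + sB A B C ^ 2 * (sC A B C ^ 2 + sA A B C ^ 2 - sB A B C ^ 2)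
     + sC A B C ^ 2 * (sA A B C ^ 2 + sB A B C ^ 2 - sC A B C ^ 2)
    = 4 * cr A B C ^ 2 := by
  simp only [sA, sB, sC, dst_sq, cr]
  ring

lemma circum_dot1 (A B C : Pt) (h : cr A B C ≠ 0) :
    2 * dot (circumcenter A B C) (B - A) = dot B B - dot A A := by
  rw [circumcenter_eq_smul, dot_smul_left, sum_w]
  have h4 : (4 : ℝ) * cr A B C ^ 2 ≠ 0 := by positivity
  rw [inv_mul_eq_div, mul_div_assoc', div_eq_iff h4]
  simp only [dot, Prod.fst_add, Prod.snd_add, Prod.smul_fst, Prod.smul_snd,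
    Prod.fst_sub, Prod.snd_sub, smul_eq_mul, sA, sB, sC, dst_sq, cr]
  ring

lemma circum_dot2 (A B C : Pt) (h : cr A B C ≠ 0) :
    2 * dot (circumcenter A B C) (C - B) = dot C C - dot B B := by
  rw [circumcenter_eq_smul, dot_smul_left, sum_w]
  have h4 : (4 : ℝ) * cr A B C ^ 2 ≠ 0 := by positivity
  rw [inv_mul_eq_div, mul_div_assoc', div_eq_iff h4]
  simp only [dot, Prod.fst_add, Prod.snd_add, Prod.smul_fst, Prod.smul_snd,
    Prod.fst_sub, Prod.snd_sub, smul_eq_mul, sA, sB, sC, dst_sq, cr]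
  ring

/-- Identity relating squared distances and the dot relation. -/
lemma dist_sub (X A B : Pt) :
    dst X A ^ 2 - dst X B ^ 2 = 2 * dot X (B - A) - (dot B B - dot A A) := by
  simp only [dst_sq, dot, Prod.fst_sub, Prod.snd_sub]
  ring

/-- Three distinct points admitting an equidistant point are not collinear. -/
lemma noncollinear_of_equidist (Y Q1 Q2 Q3 : Pt)
    (h12 : Q1 ≠ Q2) (h23 : Q2 ≠ Q3) (h31 : Q3 ≠ Q1)
    (e12 : dst Y Q1 ^ 2 = dst Y Q2 ^ 2) (e13 : dst Y Q1 ^ 2 = dst Y Q3 ^ 2) :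
    cr Q1 Q2 Q3 ≠ 0 := by
  intro h0
  obtain ⟨y1, y2⟩ := Y
  obtain ⟨a1, a2⟩ := Q1
  obtain ⟨b1, b2⟩ := Q2
  obtain ⟨c1, c2⟩ := Q3
  simp only [dst_sq, cr] at e12 e13 h0
  set u1 := b1 - a1 with hu1
  set u2 := b2 - a2 with hu2
  set w1 := c1 - a1 with hw1
  set w2 := c2 - a2 with hw2
  have hu : u1 ^ 2 + u2 ^ 2 ≠ 0 := by
    intro h
    apply h12
    have h1 : u1 = 0 := by nlinarith [sq_nonneg u1, sq_nonneg u2]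
    have h2 : u2 = 0 := by nlinarith [sq_nonneg u1, sq_nonneg u2]
    rw [hu1] at h1; rw [hu2] at h2
    have e1 : b1 = a1 := by linarith
    have e2 : b2 = a2 := by linarith
    simp [e1, e2]
  set t := (u1 * w1 + u2 * w2) / (u1 ^ 2 + u2 ^ 2) with hT
  have hwt1 : w1 = t * u1 := by
    rw [hT]; field_simp; linear_combination (-u2) * h0
  have hwt2 : w2 = t * u2 := by
    rw [hT]; field_simp; linear_combination u1 * h0
  have A : 2 * ((y1 - a1) * u1 + (y2 - a2) * u2) = u1 ^ 2 + u2 ^ 2 := by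
    rw [hu1, hu2]; linear_combination e12
  have B : 2 * ((y1 - a1) * w1 + (y2 - a2) * w2) = w1 ^ 2 + w2 ^ 2 := by
    rw [hw1, hw2]; linear_combination e13
  rw [hwt1, hwt2] at B
  have ht : t ^ 2 * (u1 ^ 2 + u2 ^ 2) = t * (u1 ^ 2 + u2 ^ 2) := by
    linear_combination t * A - B
  have ht2 : t ^ 2 = t := mul_right_cancel₀ hu ht
  have ht01 : t = 0 ∨ t = 1 := by
    rcases mul_eq_zero.mp (show t * (t - 1) = 0 by linear_combination ht2) with h | h
    · exact Or.inl h
    · exact Or.inr (by linarith)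
  rcases ht01 with h | h
  · apply h31
    rw [h] at hwt1 hwt2
    rw [hwt1] at hw1; rw [hwt2] at hw2
    have e1 : c1 = a1 := by linarith [hw1.symm]
    have e2 : c2 = a2 := by linarith [hw2.symm]
    simp [e1, e2]
  · apply h23
    rw [h] at hwt1 hwt2
    rw [hwt1] at hw1; rw [hwt2] at hw2
    have e1 : b1 = c1 := by rw [hu1] at hw1; linarith [hw1.symm]
    have e2 : b2 = c2 := by rw [hu2] at hw2; linarith [hw2.symm]
    simp [e1, e2]

lemma dot_sub_left (p q r : Pt) : dot (p - q) r = dot p r - dot q r := by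
  simp only [dot, Prod.fst_sub, Prod.snd_sub]; ring

/-- The circumcenter is the unique point equidistant from the vertices of a
nondegenerate triangle. -/
lemma circum_eq_of_equidist (Q1 Q2 Q3 Y : Pt) (hcr : cr Q1 Q2 Q3 ≠ 0)
    (e12 : dst Y Q1 ^ 2 = dst Y Q2 ^ 2) (e23 : dst Y Q2 ^ 2 = dst Y Q3 ^ 2) :
    circumcenter Q1 Q2 Q3 = Y := by
  have hx1 := circum_dot1 Q1 Q2 Q3 hcr
  have hx2 := circum_dot2 Q1 Q2 Q3 hcr
  have hy1 : 2 * dot Y (Q2 - Q1) = dot Q2 Q2 - dot Q1 Q1 := by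
    have h := dist_sub Y Q1 Q2; rw [e12] at h; linarith
  have hy2 : 2 * dot Y (Q3 - Q2) = dot Q3 Q3 - dot Q2 Q2 := by
    have h := dist_sub Y Q2 Q3; rw [e23] at h; linarith
  set X := circumcenter Q1 Q2 Q3 with hX
  have h1 : dot (X - Y) (Q2 - Q1) = 0 := by rw [dot_sub_left]; linarith
  have h2 : dot (X - Y) (Q3 - Q2) = 0 := by rw [dot_sub_left]; linarith
  simp only [dot, Prod.fst_sub, Prod.snd_sub, cr] at h1 h2 hcr
  have hw : (X.1 - Y.1) * (Q3.1 - Q1.1) + (X.2 - Y.2) * (Q3.2 - Q1.2) = 0 := by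
    linear_combination h1 + h2
  have hz1 : (X.1 - Y.1) *
      ((Q2.1 - Q1.1) * (Q3.2 - Q1.2) - (Q2.2 - Q1.2) * (Q3.1 - Q1.1)) = 0 := by
    linear_combination (Q3.2 - Q1.2) * h1 - (Q2.2 - Q1.2) * hw
  have hz2 : (X.2 - Y.2) *
      ((Q2.1 - Q1.1) * (Q3.2 - Q1.2) - (Q2.2 - Q1.2) * (Q3.1 - Q1.1)) = 0 := by
    linear_combination (Q2.1 - Q1.1) * hw - (Q3.1 - Q1.1) * h1
  have e1 : X.1 = Y.1 := by
    rcases mul_eq_zero.mp hz1 with h | h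
    · linarith
    · exact absurd h hcr
  have e2 : X.2 = Y.2 := by
    rcases mul_eq_zero.mp hz2 with h | h
    · linarith
    · exact absurd h hcr
  exact Prod.ext e1 e2

lemma inva_zero (p : Pt) :
    inva 1 ((0 : ℝ), (0 : ℝ)) p
      = ((p.1 ^ 2 + p.2 ^ 2)⁻¹ * p.1, (p.1 ^ 2 + p.2 ^ 2)⁻¹ * p.2) := by
  unfold inva
  apply Prod.ext <;>
    simp [Prod.fst_add, Prod.snd_add, Prod.smul_fst, Prod.smul_snd,
      Prod.fst_sub, Prod.snd_sub, smul_eq_mul, div_eq_mul_inv]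

lemma ellipse_norm_pos (a b : ℝ) (p : Pt) (h : onEllipse a b p) :
    0 < p.1 ^ 2 + p.2 ^ 2 := by
  rcases lt_or_ge 0 (p.1 ^ 2 + p.2 ^ 2) with h' | h'
  · exact h'
  · exfalso
    have h1 : p.1 = 0 := by nlinarith [sq_nonneg p.1, sq_nonneg p.2]
    have h2 : p.2 = 0 := by nlinarith [sq_nonneg p.1, sq_nonneg p.2]
    unfold onEllipse at h
    rw [h1, h2] at h
    norm_num at h

/-- Three distinct points on an ellipse are not collinear. -/
lemma ellipse_cr (a b : ℝ) (ha : a ≠ 0) (hb : b ≠ 0) (P1 P2 P3 : Pt)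
    (h1 : onEllipse a b P1) (h2 : onEllipse a b P2) (h3 : onEllipse a b P3)
    (d12 : P1 ≠ P2) (d23 : P2 ≠ P3) (d31 : P3 ≠ P1) : cr P1 P2 P3 ≠ 0 := by
  set u1 : Pt := (P1.1 / a, P1.2 / b) with hu1
  set u2 : Pt := (P2.1 / a, P2.2 / b) with hu2
  set u3 : Pt := (P3.1 / a, P3.2 / b) with hu3
  have key : ∀ p : Pt, onEllipse a b p →
      dst ((0 : ℝ), (0 : ℝ)) (p.1 / a, p.2 / b) ^ 2 = 1 := by
    intro p hp
    rw [dst_sq]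
    unfold onEllipse at hp
    field_simp at hp ⊢
    linarith
  have inj : ∀ p q : Pt, (p.1 / a, p.2 / b) = ((q.1 / a, q.2 / b) : Pt) → p = q := by
    intro p q h
    have e1 := congrArg Prod.fst h
    have e2 := congrArg Prod.snd h
    simp only at e1 e2
    apply Prod.ext
    · field_simp at e1; exact e1
    · field_simp at e2; exact e2
  have hcru : cr u1 u2 u3 ≠ 0 := by
    apply noncollinear_of_equidist ((0 : ℝ), (0 : ℝ)) u1 u2 u3
    · intro h; exact d12 (inj _ _ h)
    · intro h; exact d23 (inj _ _ h)
    · intro h; exact d31 (inj _ _ h)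
    · rw [key _ h1, key _ h2]
    · rw [key _ h1, key _ h3]
  have hrel : cr P1 P2 P3 = a * b * cr u1 u2 u3 := by
    simp only [hu1, hu2, hu3, cr]
    field_simp
  rw [hrel]
  exact mul_ne_zero (mul_ne_zero ha hb) hcru

/-- Inversion in the unit circle is injective away from the center. -/
lemma inva_inj_aux (p q : Pt) (hp : 0 < p.1 ^ 2 + p.2 ^ 2) (hq : 0 < q.1 ^ 2 + q.2 ^ 2)
    (h : ((p.1 ^ 2 + p.2 ^ 2)⁻¹ * p.1, (p.1 ^ 2 + p.2 ^ 2)⁻¹ * p.2)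
        = (((q.1 ^ 2 + q.2 ^ 2)⁻¹ * q.1, (q.1 ^ 2 + q.2 ^ 2)⁻¹ * q.2) : Pt)) : p = q := by
  have e1 := congrArg Prod.fst h
  have e2 := congrArg Prod.snd h
  simp only at e1 e2
  have hp' : p.1 ^ 2 + p.2 ^ 2 ≠ 0 := hp.ne'
  have hq' : q.1 ^ 2 + q.2 ^ 2 ≠ 0 := hq.ne'
  rw [inv_mul_eq_div, inv_mul_eq_div, div_eq_div_iff hp' hq'] at e1 e2
  have hnn : (q.1 ^ 2 + q.2 ^ 2) = (p.1 ^ 2 + p.2 ^ 2) := by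
    have hsq : (q.1 ^ 2 + q.2 ^ 2) ^ 2 * (p.1 ^ 2 + p.2 ^ 2)
        = (p.1 ^ 2 + p.2 ^ 2) ^ 2 * (q.1 ^ 2 + q.2 ^ 2) := by
      linear_combination (p.1 * (q.1 ^ 2 + q.2 ^ 2) + q.1 * (p.1 ^ 2 + p.2 ^ 2)) * e1
        + (p.2 * (q.1 ^ 2 + q.2 ^ 2) + q.2 * (p.1 ^ 2 + p.2 ^ 2)) * e2
    have hfac : (p.1 ^ 2 + p.2 ^ 2) * (q.1 ^ 2 + q.2 ^ 2)
        * ((q.1 ^ 2 + q.2 ^ 2) - (p.1 ^ 2 + p.2 ^ 2)) = 0 := by linear_combination hsq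
    rcases mul_eq_zero.mp hfac with h' | h'
    · exact absurd h' (by positivity)
    · linarith
  rw [hnn] at e1 e2
  apply Prod.ext
  · exact mul_right_cancel₀ hp' e1
  · exact mul_right_cancel₀ hp' e2

/-- Key distance computation: the point `(-δ⁻¹) • X` is at distance `√(R²)/δ`
from the inverse of any point `p` on the circle of center `X`, squared radius
`R2`, when the power of the origin w.r.t. that circle is `-δ`. -/
lemma key_dist (δ R2 : ℝ) (hδ : 0 < δ) (X p : Pt) (hn : 0 < p.1 ^ 2 + p.2 ^ 2)
    (hF : X.1 ^ 2 + X.2 ^ 2 - R2 = -δ)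
    (hG : (X.1 - p.1) ^ 2 + (X.2 - p.2) ^ 2 = R2) :
    dst ((-δ⁻¹) • X) (inva 1 ((0 : ℝ), (0 : ℝ)) p) ^ 2 = R2 / δ ^ 2 := by
  rw [inva_zero, dst_sq]
  simp only [Prod.smul_fst, Prod.smul_snd, smul_eq_mul]
  have hδ' : δ ≠ 0 := hδ.ne'
  have hn' : p.1 ^ 2 + p.2 ^ 2 ≠ 0 := hn.ne'
  set n := p.1 ^ 2 + p.2 ^ 2 with hndef
  have expand : (-δ⁻¹ * X.1 - n⁻¹ * p.1) ^ 2 + (-δ⁻¹ * X.2 - n⁻¹ * p.2) ^ 2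
      = ((n * X.1 + δ * p.1) ^ 2 + (n * X.2 + δ * p.2) ^ 2) / (δ ^ 2 * n ^ 2) := by
    field_simp
    ring
  rw [expand, div_eq_div_iff (by positivity) (by positivity : (δ:ℝ) ^ 2 ≠ 0)]
  linear_combination (δ ^ 2 * (n ^ 2 + δ * n)) * hF - (δ ^ 3 * n) * hG
    + (δ ^ 2 * n + δ ^ 3 - R2 * δ ^ 2) * hndef

end BilliardInv


open BilliardInv Real

/-- given that the power of the billiard center w.r.t. the
circumcircle of every 3-periodic equals −δ, the circumcenter of the
center-inversive triangle equals −X₃/δ, i.e. the locus of X₃⊙ is the locus of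
X₃ scaled by 1/δ. -/
theorem center_inversive_circumcenter (a b : ℝ) (hab : a > b) (hb : b > 0)
    (T : Orbit3 a b)
    (hpow :
      let X3 := circumcenter T.P1 T.P2 T.P3
      (dst ((0 : ℝ), (0 : ℝ)) X3) ^ 2 - (dst X3 T.P1) ^ 2 =
        -Real.sqrt (a ^ 4 - a ^ 2 * b ^ 2 + b ^ 4)) :
    let δ : ℝ := Real.sqrt (a ^ 4 - a ^ 2 * b ^ 2 + b ^ 4)
    let O : Pt := (0, 0)
    circumcenter (inva 1 O T.P1) (inva 1 O T.P2) (inva 1 O T.P3) =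
      (-δ⁻¹) • circumcenter T.P1 T.P2 T.P3 := by
  intro δ O
  have ha : (0 : ℝ) < a := lt_trans hb hab
  have hcrP : cr T.P1 T.P2 T.P3 ≠ 0 :=
    ellipse_cr a b ha.ne' hb.ne' T.P1 T.P2 T.P3 T.h1 T.h2 T.h3 T.d12 T.d23 T.d31
  have hδpos : 0 < δ := Real.sqrt_pos.mpr (by nlinarith [sq_nonneg (a ^ 2 - b ^ 2), mul_pos (mul_pos ha hb) (mul_pos ha hb)])
  set X := circumcenter T.P1 T.P2 T.P3 with hXdef
  have hpow' : dst ((0 : ℝ), (0 : ℝ)) X ^ 2 - dst X T.P1 ^ 2 = -δ := hpow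
  have e12P : dst X T.P1 ^ 2 = dst X T.P2 ^ 2 := by
    have h := dist_sub X T.P1 T.P2
    have h' := circum_dot1 T.P1 T.P2 T.P3 hcrP
    rw [← hXdef] at h'
    linarith
  have e23P : dst X T.P2 ^ 2 = dst X T.P3 ^ 2 := by
    have h := dist_sub X T.P2 T.P3
    have h' := circum_dot2 T.P1 T.P2 T.P3 hcrP
    rw [← hXdef] at h'
    linarith
  set R2 := dst X T.P1 ^ 2 with hR2
  have hF : X.1 ^ 2 + X.2 ^ 2 - R2 = -δ := by
    have hd : dst ((0 : ℝ), (0 : ℝ)) X ^ 2 = X.1 ^ 2 + X.2 ^ 2 := by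
      rw [dst_sq]; ring_nf
    linarith
  have hG1 : (X.1 - T.P1.1) ^ 2 + (X.2 - T.P1.2) ^ 2 = R2 := by
    rw [hR2, dst_sq]
  have hG2 : (X.1 - T.P2.1) ^ 2 + (X.2 - T.P2.2) ^ 2 = R2 := by
    rw [e12P, dst_sq]
  have hG3 : (X.1 - T.P3.1) ^ 2 + (X.2 - T.P3.2) ^ 2 = R2 := by
    rw [e12P, e23P, dst_sq]
  have hn1 := ellipse_norm_pos a b T.P1 T.h1
  have hn2 := ellipse_norm_pos a b T.P2 T.h2
  have hn3 := ellipse_norm_pos a b T.P3 T.h3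
  have k1 := key_dist δ R2 hδpos X T.P1 hn1 hF hG1
  have k2 := key_dist δ R2 hδpos X T.P2 hn2 hF hG2
  have k3 := key_dist δ R2 hδpos X T.P3 hn3 hF hG3
  have hq12 : inva 1 ((0 : ℝ), (0 : ℝ)) T.P1 ≠ inva 1 ((0 : ℝ), (0 : ℝ)) T.P2 := by
    rw [inva_zero, inva_zero]; intro h; exact T.d12 (inva_inj_aux _ _ hn1 hn2 h)
  have hq23 : inva 1 ((0 : ℝ), (0 : ℝ)) T.P2 ≠ inva 1 ((0 : ℝ), (0 : ℝ)) T.P3 := by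
    rw [inva_zero, inva_zero]; intro h; exact T.d23 (inva_inj_aux _ _ hn2 hn3 h)
  have hq31 : inva 1 ((0 : ℝ), (0 : ℝ)) T.P3 ≠ inva 1 ((0 : ℝ), (0 : ℝ)) T.P1 := by
    rw [inva_zero, inva_zero]; intro h; exact T.d31 (inva_inj_aux _ _ hn3 hn1 h)
  have e12 := k1.trans k2.symm
  have e13 := k1.trans k3.symm
  have e23 := k2.trans k3.symm
  have hcrQ := noncollinear_of_equidist ((-δ⁻¹) • X) _ _ _ hq12 hq23 hq31 e12 e13
  show circumcenter (inva 1 ((0 : ℝ), (0 : ℝ)) T.P1) (inva 1 ((0 : ℝ), (0 : ℝ)) T.P2)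
      (inva 1 ((0 : ℝ), (0 : ℝ)) T.P3) = (-δ⁻¹) • X
  exact circum_eq_of_equidist _ _ _ _ hcrQ e12 e23
end
end
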